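/- Let f(x) = ∑_{n≥0} a(n)x^n ∈ Z[[x]] satisfy a homogeneous linear differential equation ∑_{i=0}^r P_i(x) f^{(i)}(x) = 0 with P_i ∈ Z[x], P_r ≠ 0, and suppose the coefficient sequence has the Lucas property with a(0)=1. Let d = max_i deg P_i and m = r + d. Then for every prime p, setting A(x) = ∑_{n=0}^{p-1} a(n)x^n, every non-constant irreducible factor C(x) of (A mod p) ∈ F_p[x] either satisfies that C(x)^m does not divide (A mod p), or C(x) divides (P_r mod p). -/

import Mathlib

/-- Formal derivative of an integer power series. -/
noncomputable def psDeriv (f : PowerSeries ℤ) : PowerSeries ℤ :=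
  PowerSeries.mk fun n => (n + 1 : ℤ) * PowerSeries.coeff (n + 1) f

lemma coeff_derivativeFun' {S : Type*} [CommRing S] (f : PowerSeries S) (n : ℕ) :
    PowerSeries.coeff n f.derivativeFun = PowerSeries.coeff (n + 1) f * (n + 1) :=
  PowerSeries.coeff_derivative f n

open Polynomial PowerSeries in
lemma map_psDeriv {S : Type*} [CommRing S] (φ : ℤ →+* S) (f : PowerSeries ℤ) :
    PowerSeries.map φ (psDeriv f) = PowerSeries.derivativeFun (PowerSeries.map φ f) := by
  ext n
  simp only [psDeriv, PowerSeries.coeff_map, PowerSeries.coeff_mk,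
    coeff_derivativeFun', map_mul]
  push_cast [map_add, map_one, map_natCast, map_mul]
  ring

open Polynomial PowerSeries in
lemma map_psDeriv_iter {S : Type*} [CommRing S] (φ : ℤ →+* S) (f : PowerSeries ℤ) (i : ℕ) :
    PowerSeries.map φ (psDeriv^[i] f) = PowerSeries.derivativeFun^[i] (PowerSeries.map φ f) := by
  induction i with
  | zero => rfl
  | succ i ih =>
      rw [Function.iterate_succ_apply', Function.iterate_succ_apply', map_psDeriv, ih]

open PowerSeries in
lemma iter_derivativeFun_mul_right {S : Type*} [CommRing S] (F g : PowerSeries S)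
    (hg : PowerSeries.derivativeFun g = 0) (i : ℕ) :
    PowerSeries.derivativeFun^[i] (F * g) = PowerSeries.derivativeFun^[i] F * g := by
  induction i with
  | zero => rfl
  | succ i ih =>
      rw [Function.iterate_succ_apply', Function.iterate_succ_apply', ih,
        PowerSeries.derivativeFun_mul, hg, smul_zero, zero_add, smul_eq_mul, mul_comm]

open Polynomial PowerSeries in
lemma iter_derivativeFun_coe {S : Type*} [CommRing S] (Q : Polynomial S) (i : ℕ) :
    PowerSeries.derivativeFun^[i] (Q : PowerSeries S)
      = ((Polynomial.derivative^[i] Q : Polynomial S) : PowerSeries S) := by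
  induction i with
  | zero => rfl
  | succ i ih =>
      rw [Function.iterate_succ_apply', Function.iterate_succ_apply', ih]
      exact PowerSeries.derivative_coe _

open Polynomial in
lemma coe_polynomial_map {S : Type*} [CommRing S] (φ : ℤ →+* S) (Q : Polynomial ℤ) :
    ((Q.map φ : Polynomial S) : PowerSeries S)
      = PowerSeries.map φ ((Q : Polynomial ℤ) : PowerSeries ℤ) := by
  ext n
  simp [Polynomial.coeff_coe, PowerSeries.coeff_map]

open Polynomial in
/-- Key derivative computation: iterated derivatives of `C^e * U`. -/
lemma iter_deriv_pow_mul {F : Type*} [CommRing F] (C U : Polynomial F) (e : ℕ) :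
    ∀ i, i ≤ e → ∃ V : Polynomial F,
      Polynomial.derivative^[i] (C ^ e * U) = C ^ (e - i) * V ∧
      C ∣ V - Polynomial.C (∏ k ∈ Finset.range i, ((e - k : ℕ) : F)) *
        Polynomial.derivative C ^ i * U
  | 0, _ => ⟨U, by simp⟩
  | (i+1), h => by
      obtain ⟨V, hV, W, hW⟩ := iter_deriv_pow_mul C U e i (Nat.le_of_succ_le h)
      refine ⟨Polynomial.C ((e - i : ℕ) : F) * Polynomial.derivative C * V
          + C * Polynomial.derivative V, ?_, ?_⟩
      · rw [Function.iterate_succ_apply', hV, Polynomial.derivative_mul,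
          Polynomial.derivative_pow]
        have h1 : e - i - 1 = e - (i+1) := by omega
        have h2 : e - i = e - (i+1) + 1 := by omega
        rw [h1, h2, pow_succ]
        ring
      · refine ⟨Polynomial.C ((e - i : ℕ) : F) * Polynomial.derivative C * W
            + Polynomial.derivative V, ?_⟩
        rw [Finset.prod_range_succ, map_mul]
        calc Polynomial.C ((e - i : ℕ) : F) * Polynomial.derivative C * V
              + C * Polynomial.derivative V
              - Polynomial.C (∏ k ∈ Finset.range i, ((e - k : ℕ) : F))
                * Polynomial.C ((e - i : ℕ) : F)
                * Polynomial.derivative C ^ (i + 1) * U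
            = Polynomial.C ((e - i : ℕ) : F) * Polynomial.derivative C *
                (V - Polynomial.C (∏ k ∈ Finset.range i, ((e - k : ℕ) : F))
                  * Polynomial.derivative C ^ i * U)
              + C * Polynomial.derivative V := by ring
          _ = C * (Polynomial.C ((e - i : ℕ) : F) * Polynomial.derivative C * W
              + Polynomial.derivative V) := by rw [hW]; ring

/-- Lemma 7.4: let `f = ∑ a(n)xⁿ ∈ ℤ[[x]]` satisfy `∑_{i=0}^r P_i(x) f^{(i)}(x) = 0`
with `P_r ≠ 0`, have the Lucas property, and `a(0) = 1`. Let `d` bound the degrees of the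
`P_i` and set `m = r + d`. Then for every prime `p`, with `A(x) = ∑_{n<p} a(n)xⁿ`, every
non-constant irreducible factor `C(x)` of `Ā ∈ 𝔽_p[x]` either satisfies that `C^m` does
not divide `Ā`, or `C` divides `P_r mod p`. -/
theorem lucas_ode_factor_bound (f : PowerSeries ℤ)
    (h0 : PowerSeries.coeff 0 f = 1)
    (hLucas : ∀ p : ℕ, p.Prime → ∀ n j : ℕ, j < p →
      (PowerSeries.coeff (p * n + j) f) ≡
        (PowerSeries.coeff n f) * (PowerSeries.coeff j f) [ZMOD p])
    (r d : ℕ) (P : Fin (r + 1) → Polynomial ℤ)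
    (hPr : P (Fin.last r) ≠ 0)
    (hd : ∀ i, (P i).natDegree ≤ d)
    (hode : ∑ i : Fin (r + 1),
      (Polynomial.coeToPowerSeries.ringHom (P i)) * psDeriv^[(i : ℕ)] f = 0)
    (p : ℕ) (hp : p.Prime)
    (A : Polynomial (ZMod p))
    (hA : A = ∑ n ∈ Finset.range p,
      Polynomial.C ((PowerSeries.coeff (R := ℤ) n f : ZMod p)) * Polynomial.X ^ n)
    (C : Polynomial (ZMod p)) (hCirr : Irreducible C) (hC : 0 < C.natDegree)
    (hCA : C ∣ A) :
    ¬ (C ^ (r + d) ∣ A) ∨ C ∣ (P (Fin.last r)).map (Int.castRingHom (ZMod p)) := by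
  classical
  by_cases hdvd : C ^ (r + d) ∣ A
  swap
  · exact Or.inl hdvd
  right
  haveI : Fact p.Prime := ⟨hp⟩
  set φ : ℤ →+* ZMod p := Int.castRingHom (ZMod p) with hφ
  have hp0 : 0 < p := hp.pos
  -- coefficients of A
  have hAcoeff : ∀ n : ℕ, A.coeff n
      = if n < p then ((PowerSeries.coeff (R := ℤ) n f : ZMod p)) else 0 := by
    intro n
    rw [hA, Polynomial.finset_sum_coeff]
    simp only [Polynomial.coeff_C_mul, Polynomial.coeff_X_pow, mul_ite, mul_one, mul_zero]
    rw [Finset.sum_ite_eq (Finset.range p) n]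
    simp [Finset.mem_range]
  -- the series g(x) = f(x^p) mod p
  set g : PowerSeries (ZMod p) := PowerSeries.mk
    (fun n => if p ∣ n then ((PowerSeries.coeff (R := ℤ) (n / p) f : ZMod p)) else 0) with hg
  -- factorization f ≡ A * g (mod p)
  have hfactor : ((A : Polynomial (ZMod p)) : PowerSeries (ZMod p)) * g
      = PowerSeries.map φ f := by
    ext N
    rw [PowerSeries.coeff_mul]
    rw [Finset.sum_eq_single (N % p, p * (N / p))]
    · have h1 : N % p < p := Nat.mod_lt _ hp0
      have h2 : p ∣ p * (N / p) := dvd_mul_right _ _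
      have h3 : p * (N / p) / p = N / p := Nat.mul_div_cancel_left _ hp0
      have hLN := hLucas p hp (N / p) (N % p) h1
      have hcast : ((PowerSeries.coeff (R := ℤ) (p * (N / p) + N % p) f : ZMod p))
          = ((PowerSeries.coeff (R := ℤ) (N / p) f * PowerSeries.coeff (R := ℤ) (N % p) f : ℤ) : ZMod p) :=
        (ZMod.intCast_eq_intCast_iff _ _ _).2 hLN
      rw [Nat.div_add_mod N p] at hcast
      simp only [Polynomial.coeff_coe, hAcoeff, hg, PowerSeries.coeff_mk,
        PowerSeries.coeff_map, if_pos h1, if_pos h2, h3, hφ]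
      rw [eq_intCast, hcast]
      push_cast
      ring
    · rintro ⟨j, k⟩ hmem hne
      rw [Finset.HasAntidiagonal.mem_antidiagonal] at hmem
      simp only [Polynomial.coeff_coe, hAcoeff, hg, PowerSeries.coeff_mk]
      by_cases hj : j < p
      · by_cases hk : p ∣ k
        · exfalso
          apply hne
          obtain ⟨t, rfl⟩ := hk
          have hj' : j = N % p := by
            rw [← hmem, Nat.add_mul_mod_self_left, Nat.mod_eq_of_lt hj]
          subst hj'
          have ht : t = N / p := by
            refine Nat.eq_of_mul_eq_mul_left hp0 ?_
            have := Nat.div_add_mod N p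
            omega
          subst ht
          rfl
        · rw [if_neg hk, mul_zero]
      · rw [if_neg hj, zero_mul]
    · intro hmem
      exfalso
      apply hmem
      rw [Finset.HasAntidiagonal.mem_antidiagonal]
      exact Nat.mod_add_div N p
  -- derivative of g vanishes
  have hg0 : PowerSeries.derivativeFun g = 0 := by
    ext n
    rw [coeff_derivativeFun', hg, PowerSeries.coeff_mk]
    by_cases hdn : p ∣ (n + 1)
    · rw [if_pos hdn]
      have : ((n : ZMod p) + 1) = ((n + 1 : ℕ) : ZMod p) := by push_cast; ring
      rw [this, (ZMod.natCast_eq_zero_iff _ _).2 hdn, mul_zero]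
      simp
    · rw [if_neg hdn, zero_mul]
      simp
  -- g has invertible constant coefficient
  have hgc : PowerSeries.constantCoeff (R := ZMod p) g ≠ 0 := by
    rw [hg, ← PowerSeries.coeff_zero_eq_constantCoeff_apply, PowerSeries.coeff_mk]
    rw [if_pos (dvd_zero p), Nat.zero_div, h0]
    simp
  -- the polynomial ODE identity mod p
  have key : (∑ i : Fin (r + 1),
      (P i).map φ * Polynomial.derivative^[(i : ℕ)] A) = 0 := by
    have h1 : ∑ i : Fin (r + 1),
        (((P i).map φ * Polynomial.derivative^[(i : ℕ)] A : Polynomial (ZMod p))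
          : PowerSeries (ZMod p)) * g = 0 := by
      have h2 := congrArg (PowerSeries.map φ) hode
      rw [map_sum, map_zero] at h2
      rw [← h2]
      refine Finset.sum_congr rfl fun i _ => ?_
      calc (((P i).map φ * Polynomial.derivative^[(i : ℕ)] A : Polynomial (ZMod p))
            : PowerSeries (ZMod p)) * g
          = (((P i).map φ : Polynomial (ZMod p)) : PowerSeries (ZMod p)) *
            ((((Polynomial.derivative^[(i : ℕ)] A : Polynomial (ZMod p)))
              : PowerSeries (ZMod p)) * g) := by rw [Polynomial.coe_mul, mul_assoc]
        _ = PowerSeries.map φ ((P i : PowerSeries ℤ)) *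
            (PowerSeries.derivativeFun^[(i : ℕ)]
              ((A : Polynomial (ZMod p)) : PowerSeries (ZMod p)) * g) := by
              rw [coe_polynomial_map, iter_derivativeFun_coe]
        _ = PowerSeries.map φ ((P i : PowerSeries ℤ)) *
            PowerSeries.derivativeFun^[(i : ℕ)]
              (((A : Polynomial (ZMod p)) : PowerSeries (ZMod p)) * g) := by
              rw [iter_derivativeFun_mul_right _ _ hg0]
        _ = PowerSeries.map φ (Polynomial.coeToPowerSeries.ringHom (P i) * psDeriv^[(i : ℕ)] f)
            := by rw [hfactor, ← map_psDeriv_iter, ← map_mul,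
                Polynomial.coeToPowerSeries.ringHom_apply]
    have hcoe : ((∑ i : Fin (r + 1),
        (P i).map φ * Polynomial.derivative^[(i : ℕ)] A : Polynomial (ZMod p))
          : PowerSeries (ZMod p))
        = ∑ i : Fin (r + 1), (((P i).map φ * Polynomial.derivative^[(i : ℕ)] A
            : Polynomial (ZMod p)) : PowerSeries (ZMod p)) := by
      simp only [← Polynomial.coeToPowerSeries.ringHom_apply, map_sum]
    have h3 : ((∑ i : Fin (r + 1),
        (P i).map φ * Polynomial.derivative^[(i : ℕ)] A : Polynomial (ZMod p))
          : PowerSeries (ZMod p)) * g = 0 := by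
      rw [hcoe, Finset.sum_mul, h1]
    have h4 := congrArg (· * g⁻¹) h3
    simp only [zero_mul, mul_assoc, PowerSeries.mul_inv_cancel g hgc, mul_one] at h4
    exact_mod_cast h4
  -- now the polynomial argument
  have hCne : C ≠ 0 := hCirr.ne_zero
  have hAne : A ≠ 0 := by
    intro h
    have h5 := hAcoeff 0
    rw [h, Polynomial.coeff_zero, if_pos hp0, h0] at h5
    simp at h5
  have hAdeg : A.natDegree ≤ p - 1 := by
    rw [Polynomial.natDegree_le_iff_coeff_eq_zero]
    intro m hm
    rw [hAcoeff, if_neg (by omega)]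
  have hdegle : ∀ n : ℕ, C ^ n ∣ A → n ≤ A.natDegree := by
    intro n hn
    have h1 := Polynomial.natDegree_le_of_dvd hn hAne
    rw [Polynomial.natDegree_pow] at h1
    calc n = n * 1 := (mul_one n).symm
      _ ≤ n * C.natDegree := Nat.mul_le_mul_left n hC
      _ ≤ A.natDegree := h1
  set e := Nat.findGreatest (fun n => C ^ n ∣ A) A.natDegree with he
  have he1 : C ^ e ∣ A :=
    Nat.findGreatest_spec (P := fun n => C ^ n ∣ A) (m := 0) (Nat.zero_le _)
      (by simpa using one_dvd A)
  have he2 : ¬ C ^ (e + 1) ∣ A := fun h =>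
    Nat.findGreatest_is_greatest (P := fun n => C ^ n ∣ A)
      (Nat.lt_succ_self e) (hdegle _ h) h
  have he3 : r + d ≤ e :=
    Nat.le_findGreatest (P := fun n => C ^ n ∣ A) (hdegle _ hdvd) hdvd
  have hep : e ≤ p - 1 := le_trans (hdegle _ he1) hAdeg
  have hre : r ≤ e := le_trans (Nat.le_add_right r d) he3
  obtain ⟨U, hU⟩ := he1
  have hCU : ¬ C ∣ U := by
    rintro ⟨W, hW⟩
    exact he2 ⟨W, by rw [hU, hW, pow_succ]; ring⟩
  have hViter := fun (i : Fin (r + 1)) =>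
    iter_deriv_pow_mul C U e (i : ℕ) (le_trans (Nat.lt_succ_iff.mp i.isLt) hre)
  choose V hV1 hV2 using hViter
  rw [hU] at key
  have hsplit := Finset.add_sum_erase Finset.univ
    (fun i : Fin (r + 1) => (P i).map φ * Polynomial.derivative^[(i : ℕ)] (C ^ e * U))
    (Finset.mem_univ (Fin.last r))
  rw [key] at hsplit
  beta_reduce at hsplit
  have hrest : C ^ (e - r + 1) ∣ ∑ i ∈ Finset.univ.erase (Fin.last r),
      (P i).map φ * Polynomial.derivative^[(i : ℕ)] (C ^ e * U) := by
    refine Finset.dvd_sum fun i hi => ?_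
    have hir : (i : ℕ) < r := by
      have hne := Finset.ne_of_mem_erase hi
      have h6 : (i : ℕ) ≠ r := fun h => hne (Fin.ext (by simpa [Fin.val_last] using h))
      have h7 := Nat.lt_succ_iff.mp i.isLt
      omega
    rw [hV1 i]
    refine ⟨(P i).map φ * (C ^ (r - 1 - (i : ℕ)) * V i), ?_⟩
    have h8 : e - (i : ℕ) = (e - r + 1) + (r - 1 - (i : ℕ)) := by omega
    rw [h8, pow_add]
    ring
  have hlast : C ^ (e - r + 1) ∣ (P (Fin.last r)).map φ *
      Polynomial.derivative^[((Fin.last r) : ℕ)] (C ^ e * U) := by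
    have h9 := eq_neg_of_add_eq_zero_left hsplit
    rw [h9]
    exact (dvd_neg).2 hrest
  rw [hV1 (Fin.last r)] at hlast
  rw [show ((Fin.last r : Fin (r+1)) : ℕ) = r from rfl] at hlast
  have hkey2 : C ∣ (P (Fin.last r)).map φ * V (Fin.last r) := by
    have hpow : (C ^ (e - r)) ≠ 0 := pow_ne_zero _ hCne
    have h5 : C ^ (e - r) * C ∣ C ^ (e - r) * ((P (Fin.last r)).map φ * V (Fin.last r)) := by
      rw [← pow_succ]
      have h6 : C ^ (e - r) * ((P (Fin.last r)).map φ * V (Fin.last r))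
          = (P (Fin.last r)).map φ * (C ^ (e - r) * V (Fin.last r)) := by ring
      rw [h6]
      exact hlast
    exact (mul_dvd_mul_iff_left hpow).1 h5
  have hprime := hCirr.prime
  rcases hprime.dvd_mul.1 hkey2 with hfin | hVr
  · exact hfin
  · exfalso
    have hT : C ∣ Polynomial.C (∏ k ∈ Finset.range r, ((e - k : ℕ) : ZMod p)) *
        Polynomial.derivative C ^ r * U := by
      have h6 := hV2 (Fin.last r)
      rw [show ((Fin.last r : Fin (r+1)) : ℕ) = r from rfl] at h6
      have h7 := dvd_sub hVr h6
      rwa [sub_sub_cancel] at h7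
    rcases hprime.dvd_mul.1 hT with h7 | h7U
    · rcases hprime.dvd_mul.1 h7 with h8 | h8
      · have hcne : (∏ k ∈ Finset.range r, ((e - k : ℕ) : ZMod p)) ≠ 0 := by
          rw [Finset.prod_ne_zero_iff]
          intro k hk
          rw [Finset.mem_range] at hk
          intro h9
          rw [ZMod.natCast_eq_zero_iff] at h9
          have h10 := Nat.le_of_dvd (by omega) h9
          omega
        have h11 := Polynomial.natDegree_le_of_dvd h8 (Polynomial.C_ne_zero.mpr hcne)
        rw [Polynomial.natDegree_C] at h11
        omega
      · have h9 := hprime.dvd_of_dvd_pow h8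
        have hsep := PerfectField.separable_of_irreducible hCirr
        rw [Polynomial.separable_def] at hsep
        exact hCirr.not_isUnit (hsep.isUnit_of_dvd' dvd_rfl h9)
    · exact hCU h7U
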